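/- Assume ξ₁ξ₂ > 0. Then a real number g satisfies the eigenvalue degeneracy condition Δ_h = 0 if and only if g = (−ξ₁ − ξ₂ + 2√(ξ₁ξ₂))·L₁L₂ or g = (−ξ₁ − ξ₂ − 2√(ξ₁ξ₂))·L₁L₂. -/

import Mathlib

/-- Assume `ξ₁ξ₂ > 0`. Then a real number `g` satisfies the eigenvalue
degeneracy condition `Δ_h = 0` iff `g = (−ξ₁ − ξ₂ ± 2√(ξ₁ξ₂))·L₁L₂`. -/
theorem degeneracy_condition_iff (L₁ C₁ L₂ C₂ : ℝ)
    (hL₁ : L₁ ≠ 0) (hC₁ : C₁ ≠ 0) (hL₂ : L₂ ≠ 0) (hC₂ : C₂ ≠ 0)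
    (ξ₁ ξ₂ : ℝ) (hξ₁ : ξ₁ = 1 / (L₁ * C₁)) (hξ₂ : ξ₂ = 1 / (L₂ * C₂))
    (hpos : 0 < ξ₁ * ξ₂) (g : ℝ) :
    g ^ 2 / (L₁ ^ 2 * L₂ ^ 2) + 2 * (ξ₁ + ξ₂) * g / (L₁ * L₂) + (ξ₁ - ξ₂) ^ 2 = 0 ↔
      g = (-ξ₁ - ξ₂ + 2 * Real.sqrt (ξ₁ * ξ₂)) * (L₁ * L₂) ∨
      g = (-ξ₁ - ξ₂ - 2 * Real.sqrt (ξ₁ * ξ₂)) * (L₁ * L₂) := by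
  have hs : Real.sqrt (ξ₁ * ξ₂) ^ 2 = ξ₁ * ξ₂ := Real.sq_sqrt hpos.le
  have key : g ^ 2 / (L₁ ^ 2 * L₂ ^ 2) + 2 * (ξ₁ + ξ₂) * g / (L₁ * L₂) + (ξ₁ - ξ₂) ^ 2 =
      ((g - (-ξ₁ - ξ₂ + 2 * Real.sqrt (ξ₁ * ξ₂)) * (L₁ * L₂)) *
        (g - (-ξ₁ - ξ₂ - 2 * Real.sqrt (ξ₁ * ξ₂)) * (L₁ * L₂))) / (L₁ ^ 2 * L₂ ^ 2) := by
    field_simp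
    linear_combination (4 * L₁ ^ 2 * L₂ ^ 2) * hs
  rw [key, div_eq_zero_iff, mul_eq_zero, sub_eq_zero, sub_eq_zero]
  have : L₁ ^ 2 * L₂ ^ 2 ≠ 0 := by positivity
  tauto
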